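/- Let zⁿ, z^{n-1}, z̃ ∈ ℝ^n, rⁿ, r^{n+1} ∈ ℝ, g ∈ ℝ^n, Δt > 0, S skew-adjoint, L symmetric. Suppose z^{n+1}, r^{n+1} satisfy (z^{n+1}-zⁿ)/Δt = S(L((zⁿ+z^{n+1})/2) + ((rⁿ+r^{n+1})/2) • g) and (r^{n+1}-rⁿ)/Δt = (1/2)⟪g, (z^{n+1}-zⁿ)/Δt⟫. Then (1/2)⟪z^{n+1}, L z^{n+1}⟫ + (r^{n+1})^2 = (1/2)⟪zⁿ, L zⁿ⟫ + (rⁿ)^2. -/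

import Mathlib

open scoped RealInnerProductSpace

/-- Discrete modified-energy conservation of the SAV-CN scheme. -/
theorem stmt4 {n : ℕ}
    (S L : EuclideanSpace ℝ (Fin n) →L[ℝ] EuclideanSpace ℝ (Fin n))
    (hS : ∀ x y, ⟪S x, y⟫ = -⟪x, S y⟫)
    (hL : ∀ x y, ⟪L x, y⟫ = ⟪x, L y⟫)
    (zn zn1 g : EuclideanSpace ℝ (Fin n)) (rn rn1 Δt : ℝ) (hΔt : 0 < Δt)
    (hupdz : (Δt)⁻¹ • (zn1 - zn)
      = S (L ((1 / 2 : ℝ) • (zn + zn1)) + ((rn + rn1) / 2) • g))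
    (hupdr : (rn1 - rn) / Δt = (1 / 2 : ℝ) * ⟪g, (Δt)⁻¹ • (zn1 - zn)⟫) :
    (1 / 2 : ℝ) * ⟪zn1, L zn1⟫ + rn1 ^ 2 = (1 / 2 : ℝ) * ⟪zn, L zn⟫ + rn ^ 2 := by
  set w := L ((1 / 2 : ℝ) • (zn + zn1)) + ((rn + rn1) / 2) • g with hw
  have hΔt' : Δt ≠ 0 := ne_of_gt hΔt
  have h0 : ⟪S w, w⟫ = 0 := by
    have h := hS w w
    have hc : ⟪w, S w⟫ = ⟪S w, w⟫ := real_inner_comm _ _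
    linarith
  have h1 : ⟪zn1 - zn, w⟫ = 0 := by
    have h2 : ⟪(Δt)⁻¹ • (zn1 - zn), w⟫ = 0 := by rw [hupdz]; exact h0
    rw [real_inner_smul_left] at h2
    have := mul_eq_zero.mp h2
    rcases this with h | h
    · exact absurd h (inv_ne_zero hΔt')
    · exact h
  have hg : ⟪g, zn1 - zn⟫ = 2 * (rn1 - rn) := by
    rw [real_inner_smul_right] at hupdr
    set a := ⟪g, zn1 - zn⟫ with ha
    field_simp at hupdr
    have h2 : (2 * (rn1 - rn)) * Δt = a * Δt := by rw [← hupdr]; ring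
    have := mul_right_cancel₀ hΔt' h2
    linarith
  have hcross : ⟪zn1, L zn⟫ = ⟪zn, L zn1⟫ := by
    rw [real_inner_comm, hL]
  have hexp : ⟪zn1 - zn, w⟫
      = (1/2 : ℝ) * (⟪zn1, L zn1⟫ - ⟪zn, L zn⟫)
        + ((rn + rn1) / 2) * ⟪zn1 - zn, g⟫ := by
    rw [hw, inner_add_right, real_inner_smul_right, map_smul,
      real_inner_smul_right, map_add, inner_add_right, inner_sub_left,
      inner_sub_left, inner_sub_left]
    rw [hcross]
    ring
  rw [hexp] at h1
  have hc2 : ⟪zn1 - zn, g⟫ = ⟪g, zn1 - zn⟫ := real_inner_comm _ _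
  rw [hc2, hg] at h1
  nlinarith [h1]
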